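/- Let G be an undirected graph with distinct nodes s and t, and let F be a balanced arc set in G⃗ such that the residual digraph G⃗_F contains no s–t path. Then val(F) is maximum among all balanced arc sets, and the set U of nodes reachable from s in G⃗_F satisfies d_G(U) = val(F); moreover, U is the inclusion-wise minimum set among all sets U' with s ∈ U', t ∉ U', and d_G(U') = val(F). -/

import Mathlib

/-!
We encode a multigraph on vertex type `V` with edge-index type `E` by a map
`G : E → V × V`: the edge with index `e` joins the (unordered) endpoints
`(G e).1` and `(G e).2`.
-/

/-- The degree of `v` in the multigraph `G`: the number of edge-ends of `G`
incident to `v` (a loop counts twice). -/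
noncomputable def mdeg {V E : Type} (G : E → V × V) (v : V) : ℕ :=
  Set.ncard {p : E × Bool | (cond p.2 (G p.1).1 (G p.1).2) = v}

/-- `mcut G U` is `d_G(U)`: the number of edges of `G` having exactly one
endpoint in `U`. -/
noncomputable def mcut {V E : Type} (G : E → V × V) (U : Set V) : ℕ :=
  Set.ncard {e : E | ((G e).1 ∈ U ∧ (G e).2 ∉ U) ∨ ((G e).2 ∈ U ∧ (G e).1 ∉ U)}

/-- Walks in the multigraph `G`; an edge may be traversed in either direction. -/
inductive MWalk {V E : Type} (G : E → V × V) : V → V → Type where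
  | nil (v : V) : MWalk G v v
  | cons {u v w : V} (e : E) (he : G e = (u, v) ∨ G e = (v, u)) (tail : MWalk G v w) :
      MWalk G u w

namespace MWalk
/-- The list of edges traversed by a walk. -/
def edges {V E : Type} {G : E → V × V} : {u v : V} → MWalk G u v → List E
  | _, _, nil _ => []
  | _, _, cons e _ p => e :: p.edges
end MWalk

/-- An instance `(G, H)` (`H` is the demand multigraph, on the same vertex set)
is feasible if the demand edges can be routed by pairwise edge-disjoint paths
of `G`: for each demand edge `i` there is a walk of `G` connecting its two
endpoints, the walks being pairwise edge-disjoint. -/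
def MFeasible {V E E' : Type} (G : E → V × V) (H : E' → V × V) : Prop :=
  ∃ P : (i : E') → MWalk G (H i).1 (H i).2,
    ∀ i j : E', i ≠ j → List.Disjoint (P i).edges (P j).edges

/-- The multigraph `G` is connected (all of its vertex set lies in one
connected component). -/
def MConnected {V E : Type} (G : E → V × V) : Prop :=
  ∀ u v : V, Nonempty (MWalk G u v)

/-- The subgraph `G[U]` induced by `U` is connected: any two vertices of `U`
are joined by a walk all of whose edges have both endpoints in `U`. -/
def MInducedConnected {V E : Type} (G : E → V × V) (U : Set V) : Prop :=
  ∀ u ∈ U, ∀ v ∈ U, ∃ p : MWalk G u v, ∀ e ∈ p.edges, (G e).1 ∈ U ∧ (G e).2 ∈ U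

/-- The instance `(G, H)` is Eulerian: every vertex of `G + H` has even degree. -/
def MEulerian {V E E' : Type} (G : E → V × V) (H : E' → V × V) : Prop :=
  ∀ v : V, Even (mdeg G v + mdeg H v)

/-!
The digraph `G⃗` associated with the multigraph `G : E → V × V` has the arc set
`E × Bool`: the arc `(e, true)` traverses edge `e` from `(G e).1` to `(G e).2`,
and `(e, false)` is the oppositely directed arc.
-/

/-- The tail of an arc of `G⃗`. -/
def arcTail {V E : Type} (G : E → V × V) (a : E × Bool) : V :=
  cond a.2 (G a.1).1 (G a.1).2

/-- The head of an arc of `G⃗`. -/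
def arcHead {V E : Type} (G : E → V × V) (a : E × Bool) : V :=
  cond a.2 (G a.1).2 (G a.1).1

/-- The reverse arc `a⁻¹`. -/
def arcInv {E : Type} (a : E × Bool) : E × Bool := (a.1, !a.2)

/-- `|F ∩ δ^out(v)|`, the number of arcs of `F` leaving `v`. -/
noncomputable def outCount {V E : Type} (G : E → V × V) (F : Finset (E × Bool)) (v : V) : ℕ :=
  Set.ncard {a : E × Bool | a ∈ F ∧ arcTail G a = v}

/-- `|F ∩ δ^in(v)|`, the number of arcs of `F` entering `v`. -/
noncomputable def inCount {V E : Type} (G : E → V × V) (F : Finset (E × Bool)) (v : V) : ℕ :=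
  Set.ncard {a : E × Bool | a ∈ F ∧ arcHead G a = v}

/-- `F ⊆ AG⃗` is balanced (w.r.t. the source `s` and the sink `t`) if
`|F ∩ δ^in(v)| = |F ∩ δ^out(v)|` for every `v ∈ VG − {s, t}`. -/
def BalancedArcs {V E : Type} (G : E → V × V) (s t : V) (F : Finset (E × Bool)) : Prop :=
  ∀ v : V, v ≠ s → v ≠ t → inCount G F v = outCount G F v

/-- The value `val(F) = |F ∩ δ^out(s)| − |F ∩ δ^in(s)|` of an arc set. -/
noncomputable def bval {V E : Type} (G : E → V × V) (s : V) (F : Finset (E × Bool)) : ℤ :=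
  (outCount G F s : ℤ) - (inCount G F s : ℤ)

/-- Directed walks in `G⃗`. -/
inductive DWalk {V E : Type} (G : E → V × V) : V → V → Type where
  | nil (v : V) : DWalk G v v
  | cons {u v w : V} (a : E × Bool) (ht : arcTail G a = u) (hh : arcHead G a = v)
      (tail : DWalk G v w) : DWalk G u w

namespace DWalk
/-- The list of arcs traversed by a directed walk. -/
def arcs {V E : Type} {G : E → V × V} : {u v : V} → DWalk G u v → List (E × Bool)
  | _, _, nil _ => []
  | _, _, cons a _ _ p => a :: p.arcs
end DWalk

/-- The arcs of the residual digraph `G⃗_F = (VG, (AG⃗ − F) ∪ F⁻¹)`. -/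
def residArcs {E : Type} (F : Finset (E × Bool)) : Set (E × Bool) :=
  {a | a ∉ F ∨ arcInv a ∈ F}

/-- `v` is reachable from `u` in the residual digraph `G⃗_F`. -/
def ResidReach {V E : Type} (G : E → V × V) (F : Finset (E × Bool)) (u v : V) : Prop :=
  ∃ p : DWalk G u v, ∀ a ∈ p.arcs, a ∈ residArcs F

/-! ### Auxiliary machinery for Statement 8 -/

section Stmt8Aux

open Finset
open scoped Classical

variable {V E : Type}

private lemma ncard_filter_eq' {α : Type} (s : Finset α) (p : α → Prop) :
    Set.ncard {a | a ∈ s ∧ p a} = (s.filter p).card := by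
  rw [← Set.ncard_coe_finset (s.filter p)]
  congr 1
  ext a
  simp

private lemma outCount_eq_card (G : E → V × V) (F : Finset (E × Bool)) (v : V) :
    outCount G F v = (F.filter (fun a => arcTail G a = v)).card :=
  ncard_filter_eq' F (fun a => arcTail G a = v)

private lemma inCount_eq_card (G : E → V × V) (F : Finset (E × Bool)) (v : V) :
    inCount G F v = (F.filter (fun a => arcHead G a = v)).card :=
  ncard_filter_eq' F (fun a => arcHead G a = v)

/-- The cut edges, as a Finset. -/
private noncomputable def mcutF (G : E → V × V) [Fintype E] (U : Set V) : Finset E :=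
  Finset.univ.filter (fun e => ((G e).1 ∈ U ∧ (G e).2 ∉ U) ∨ ((G e).2 ∈ U ∧ (G e).1 ∉ U))

private lemma mcut_eq_card [Fintype E] (G : E → V × V) (U : Set V) :
    mcut G U = (mcutF G U).card := by
  rw [mcut, ← Set.ncard_coe_finset (mcutF G U)]
  congr 1
  ext e
  simp [mcutF]

/-- Arcs of `F` crossing out of `U`. -/
private noncomputable def coF (G : E → V × V) (F : Finset (E × Bool)) (U : Set V) :
    Finset (E × Bool) :=
  F.filter (fun a => arcTail G a ∈ U ∧ arcHead G a ∉ U)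

/-- Arcs of `F` crossing into `U`. -/
private noncomputable def ciF (G : E → V × V) (F : Finset (E × Bool)) (U : Set V) :
    Finset (E × Bool) :=
  F.filter (fun a => arcHead G a ∈ U ∧ arcTail G a ∉ U)

@[simp] private lemma arcTail_arcInv (G : E → V × V) (a : E × Bool) :
    arcTail G (arcInv a) = arcHead G a := by
  obtain ⟨e, b⟩ := a; cases b <;> rfl

@[simp] private lemma arcHead_arcInv (G : E → V × V) (a : E × Bool) :
    arcHead G (arcInv a) = arcTail G a := by
  obtain ⟨e, b⟩ := a; cases b <;> rfl

@[simp] private lemma arcInv_arcInv {E : Type} (a : E × Bool) : arcInv (arcInv a) = a := by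
  obtain ⟨e, b⟩ := a; cases b <;> rfl

/-- There is at most one arc on a given edge crossing out of `U`. -/
private lemma dir_unique (G : E → V × V) (U : Set V) {a b : E × Bool} (h1 : a.1 = b.1)
    (ha : arcTail G a ∈ U ∧ arcHead G a ∉ U) (hb : arcTail G b ∈ U ∧ arcHead G b ∉ U) :
    a = b := by
  obtain ⟨e, x⟩ := a
  obtain ⟨e', y⟩ := b
  simp only at h1
  subst h1
  cases x <;> cases y <;> simp_all [arcTail, arcHead]

private lemma edge_mem_mcutF [Fintype E] (G : E → V × V) (U : Set V) {a : E × Bool}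
    (ha : arcTail G a ∈ U ∧ arcHead G a ∉ U) : a.1 ∈ mcutF G U := by
  obtain ⟨e, b⟩ := a
  cases b <;> simp_all [mcutF, arcTail, arcHead]

/-- `|F ∩ δ⁺(U)| ≤ d_G(U)`. -/
private lemma coF_card_le_mcut [Fintype E] (G : E → V × V) (F : Finset (E × Bool)) (U : Set V) :
    (coF G F U).card ≤ (mcutF G U).card := by
  apply Finset.card_le_card_of_injOn (fun a => a.1)
  · intro a ha
    rw [coF, Finset.mem_coe, Finset.mem_filter] at ha
    exact edge_mem_mcutF G U ha.2
  · intro a ha b hb h1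
    simp only [coF, Finset.coe_filter, Set.mem_setOf_eq] at ha hb
    exact dir_unique G U h1 ha.2 hb.2

/-- The key counting lemma: for balanced `F` and any `U` with `s ∈ U`, `t ∉ U`,
`val F = |F ∩ δ⁺(U)| - |F ∩ δ⁻(U)|`. -/
private lemma bval_eq_cross [Fintype E] (G : E → V × V) (s t : V) (F : Finset (E × Bool))
    (hbal : BalancedArcs G s t F) (U : Set V) (hs : s ∈ U) (ht : t ∉ U) :
    bval G s F = ((coF G F U).card : ℤ) - ((ciF G F U).card : ℤ) := by
  classical
  set S : Finset V := F.image (arcTail G) ∪ F.image (arcHead G) with hS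
  -- fiberwise decomposition of tails
  have htail : (F.filter (fun a => arcTail G a ∈ U)).card
      = ∑ v ∈ S.filter (· ∈ U), (F.filter (fun a => arcTail G a = v)).card := by
    rw [Finset.card_eq_sum_card_fiberwise (f := arcTail G) (t := S.filter (· ∈ U)) ?_]
    · apply Finset.sum_congr rfl
      intro v hv
      have hvU : v ∈ U := (Finset.mem_filter.1 hv).2
      congr 1
      ext a
      simp only [Finset.mem_filter]
      constructor
      · rintro ⟨⟨h1, _⟩, h3⟩; exact ⟨h1, h3⟩
      · rintro ⟨h1, h3⟩; exact ⟨⟨h1, h3 ▸ hvU⟩, h3⟩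
    · intro a ha
      rw [Finset.mem_coe, Finset.mem_filter] at ha
      refine Finset.mem_filter.2 ⟨?_, ha.2⟩
      exact Finset.mem_union_left _ (Finset.mem_image_of_mem _ ha.1)
  have hhead : (F.filter (fun a => arcHead G a ∈ U)).card
      = ∑ v ∈ S.filter (· ∈ U), (F.filter (fun a => arcHead G a = v)).card := by
    rw [Finset.card_eq_sum_card_fiberwise (f := arcHead G) (t := S.filter (· ∈ U)) ?_]
    · apply Finset.sum_congr rfl
      intro v hv
      have hvU : v ∈ U := (Finset.mem_filter.1 hv).2
      congr 1
      ext a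
      simp only [Finset.mem_filter]
      constructor
      · rintro ⟨⟨h1, _⟩, h3⟩; exact ⟨h1, h3⟩
      · rintro ⟨h1, h3⟩; exact ⟨⟨h1, h3 ▸ hvU⟩, h3⟩
    · intro a ha
      rw [Finset.mem_coe, Finset.mem_filter] at ha
      refine Finset.mem_filter.2 ⟨?_, ha.2⟩
      exact Finset.mem_union_right _ (Finset.mem_image_of_mem _ ha.1)
  -- the per-vertex sum collapses to the contribution of `s`
  have hsum : (∑ v ∈ S.filter (· ∈ U),
        (((F.filter (fun a => arcTail G a = v)).card : ℤ)
          - ((F.filter (fun a => arcHead G a = v)).card : ℤ)))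
      = bval G s F := by
    rw [bval, outCount_eq_card, inCount_eq_card]
    apply Finset.sum_eq_single s
    · intro v hv hvs
      have hvU : v ∈ U := (Finset.mem_filter.1 hv).2
      have hvt : v ≠ t := fun h => ht (h ▸ hvU)
      have hb := hbal v hvs hvt
      rw [inCount_eq_card, outCount_eq_card] at hb
      omega
    · intro hsS
      have hs' : s ∉ S := fun h => hsS (Finset.mem_filter.2 ⟨h, hs⟩)
      have h1 : F.filter (fun a => arcTail G a = s) = ∅ := by
        apply Finset.eq_empty_of_forall_notMem
        intro a ha
        rw [Finset.mem_filter] at ha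
        exact hs' (Finset.mem_union_left _ (ha.2 ▸ Finset.mem_image_of_mem _ ha.1))
      have h2 : F.filter (fun a => arcHead G a = s) = ∅ := by
        apply Finset.eq_empty_of_forall_notMem
        intro a ha
        rw [Finset.mem_filter] at ha
        exact hs' (Finset.mem_union_right _ (ha.2 ▸ Finset.mem_image_of_mem _ ha.1))
      simp [h1, h2]
  -- splitting the tail/head counts by the position of the other endpoint
  have e1 : (F.filter (fun a => arcTail G a ∈ U)).card
      = (F.filter (fun a => arcTail G a ∈ U ∧ arcHead G a ∈ U)).card + (coF G F U).card := by
    rw [coF, ← Finset.filter_filter, ← Finset.filter_filter,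
      Finset.card_filter_add_card_filter_not]
  have e2 : (F.filter (fun a => arcHead G a ∈ U)).card
      = (F.filter (fun a => arcHead G a ∈ U ∧ arcTail G a ∈ U)).card + (ciF G F U).card := by
    rw [ciF, ← Finset.filter_filter, ← Finset.filter_filter,
      Finset.card_filter_add_card_filter_not]
  have e3 : F.filter (fun a => arcHead G a ∈ U ∧ arcTail G a ∈ U)
      = F.filter (fun a => arcTail G a ∈ U ∧ arcHead G a ∈ U) := by
    ext a; simp [Finset.mem_filter, and_comm]
  rw [e3] at e2
  rw [← hsum, Finset.sum_sub_distrib, ← Nat.cast_sum, ← Nat.cast_sum, ← htail, ← hhead]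
  omega

/-- Concatenation of directed walks. -/
private def DWalk.append {G : E → V × V} :
    {u v w : V} → DWalk G u v → DWalk G v w → DWalk G u w
  | _, _, _, .nil _, q => q
  | _, _, _, .cons a ht hh p, q => .cons a ht hh (DWalk.append p q)

private lemma DWalk.arcs_append {G : E → V × V} :
    ∀ {u v w : V} (p : DWalk G u v) (q : DWalk G v w),
      (DWalk.append p q).arcs = p.arcs ++ q.arcs
  | _, _, _, .nil _, q => rfl
  | _, _, _, .cons a ht hh p, q => by
      simp [DWalk.append, DWalk.arcs, DWalk.arcs_append p q]

private lemma ResidReach.step {G : E → V × V} {F : Finset (E × Bool)} {s u : V}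
    (h : ResidReach G F s u) {a : E × Bool} (ht : arcTail G a = u)
    (ha : a ∈ residArcs F) : ResidReach G F s (arcHead G a) := by
  obtain ⟨p, hp⟩ := h
  refine ⟨DWalk.append p (DWalk.cons a ht rfl (DWalk.nil _)), ?_⟩
  intro b hb
  rw [DWalk.arcs_append] at hb
  simp only [DWalk.arcs, List.mem_append, List.mem_cons, List.not_mem_nil, or_false] at hb
  rcases hb with hb | rfl
  · exact hp _ hb
  · exact ha

private lemma ResidReach.refl (G : E → V × V) (F : Finset (E × Bool)) (s : V) :
    ResidReach G F s s :=
  ⟨DWalk.nil s, by intro a ha; simp [DWalk.arcs] at ha⟩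

end Stmt8Aux

theorem statement8 {V E : Type} [Fintype E]
    (G : E → V × V) (s t : V) (hst : s ≠ t)
    (F : Finset (E × Bool)) (hbal : BalancedArcs G s t F)
    (hnopath : ¬ ResidReach G F s t)
    (U : Set V) (hU : U = {v : V | ResidReach G F s v}) :
    (∀ F' : Finset (E × Bool), BalancedArcs G s t F' → bval G s F' ≤ bval G s F) ∧
      (mcut G U : ℤ) = bval G s F ∧
      (∀ U' : Set V, s ∈ U' → t ∉ U' → (mcut G U' : ℤ) = bval G s F → U ⊆ U') := by
  classical
  subst hU
  set R : Set V := {v : V | ResidReach G F s v} with hR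
  have hsR : s ∈ R := ResidReach.refl G F s
  have htR : t ∉ R := hnopath
  -- every arc leaving R is saturated
  have hkey : ∀ a : E × Bool, arcTail G a ∈ R → arcHead G a ∉ R → a ∈ F ∧ arcInv a ∉ F := by
    intro a hta hha
    by_contra h
    rw [not_and_or, not_not] at h
    have hres : a ∈ residArcs F := h
    exact hha (ResidReach.step hta rfl hres)
  -- |F ∩ δ⁺(R)| = d_G(R)
  have hco : (coF G F R).card = (mcutF G R).card := by
    refine le_antisymm (coF_card_le_mcut G F R) ?_
    apply Finset.card_le_card_of_injOn
      (fun e => if (G e).1 ∈ R then (e, true) else (e, false))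
    · intro e he
      rw [mcutF, Finset.mem_coe, Finset.mem_filter] at he
      by_cases h1 : (G e).1 ∈ R
      · have h2 : (G e).2 ∉ R := by rcases he.2 with ⟨_, h⟩ | ⟨_, h⟩ <;> tauto
        have hcross : arcTail G (e, true) ∈ R ∧ arcHead G (e, true) ∉ R := ⟨h1, h2⟩
        simp only [if_pos h1]
        exact Finset.mem_filter.2 ⟨(hkey _ hcross.1 hcross.2).1, hcross⟩
      · have h2 : (G e).2 ∈ R := by rcases he.2 with ⟨h, _⟩ | ⟨h, _⟩ <;> tauto
        have hcross : arcTail G (e, false) ∈ R ∧ arcHead G (e, false) ∉ R := ⟨h2, h1⟩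
        simp only [if_neg h1]
        exact Finset.mem_filter.2 ⟨(hkey _ hcross.1 hcross.2).1, hcross⟩
    · intro e _ e' _ h
      simpa [apply_ite (Prod.fst)] using congrArg Prod.fst h
  -- no arcs of F enter R
  have hci : ciF G F R = ∅ := by
    apply Finset.eq_empty_of_forall_notMem
    intro a ha
    rw [ciF, Finset.mem_filter] at ha
    have := hkey (arcInv a) (by simpa using ha.2.1) (by simpa using ha.2.2)
    rw [arcInv_arcInv] at this
    exact this.2 ha.1
  have hmain : (mcut G R : ℤ) = bval G s F := by
    rw [bval_eq_cross G s t F hbal R hsR htR, hci, mcut_eq_card, hco]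
    simp
  refine ⟨?_, hmain, ?_⟩
  · -- maximality
    intro F' hbal'
    rw [bval_eq_cross G s t F' hbal' R hsR htR, ← hmain, mcut_eq_card]
    have h1 := coF_card_le_mcut G F' R
    have h2 : (0 : ℤ) ≤ (ciF G F' R).card := Int.natCast_nonneg _
    omega
  · -- minimality of R
    intro U' hsU' htU' hcut
    have hA := bval_eq_cross G s t F hbal U' hsU' htU'
    have hle := coF_card_le_mcut G F U'
    rw [mcut_eq_card] at hcut
    have hci' : (ciF G F U').card = 0 := by omega
    have hco' : (coF G F U').card = (mcutF G U').card := by omega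
    have hciE : ciF G F U' = ∅ := Finset.card_eq_zero.1 hci'
    -- the image of the out-crossing arcs covers all cut edges
    have himg : (coF G F U').image (fun a => a.1) = mcutF G U' := by
      apply Finset.eq_of_subset_of_card_le
      · intro e he
        obtain ⟨a, ha, rfl⟩ := Finset.mem_image.1 he
        rw [coF, Finset.mem_filter] at ha
        exact edge_mem_mcutF G U' ha.2
      · rw [Finset.card_image_of_injOn, hco']
        intro a ha b hb h1
        simp only [coF, Finset.coe_filter, Set.mem_setOf_eq] at ha hb
        exact dir_unique G U' h1 ha.2 hb.2
    -- every arc leaving U' is saturated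
    have hkey' : ∀ a : E × Bool, arcTail G a ∈ U' → arcHead G a ∉ U' →
        a ∈ F ∧ arcInv a ∉ F := by
      intro a hta hha
      have hedge : a.1 ∈ mcutF G U' := edge_mem_mcutF G U' ⟨hta, hha⟩
      rw [← himg] at hedge
      obtain ⟨b, hb, hb1⟩ := Finset.mem_image.1 hedge
      rw [coF, Finset.mem_filter] at hb
      have hba : b = a := dir_unique G U' hb1 hb.2 ⟨hta, hha⟩
      constructor
      · exact hba ▸ hb.1
      · intro hinv
        have : arcInv a ∈ ciF G F U' := by
          rw [ciF, Finset.mem_filter]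
          exact ⟨hinv, by simpa using hta, by simpa using hha⟩
        rw [hciE] at this
        exact absurd this (Finset.notMem_empty _)
    -- residual arcs never leave U'
    have hclosed : ∀ a : E × Bool, a ∈ residArcs F → arcTail G a ∈ U' → arcHead G a ∈ U' := by
      intro a hres hta
      by_contra hha
      have := hkey' a hta hha
      rcases hres with h | h
      · exact h this.1
      · exact this.2 h
    -- residual walks stay in U'
    have hwalk : ∀ {u v : V} (p : DWalk G u v),
        (∀ a ∈ p.arcs, a ∈ residArcs F) → u ∈ U' → v ∈ U' := by
      intro u v p
      induction p with
      | nil w => exact fun _ h => h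
      | cons a ht hh tail ih =>
        intro hres hu
        refine ih (fun b hb => hres b ?_) ?_
        · simp [DWalk.arcs, hb]
        · exact hh ▸ hclosed a (hres a (by simp [DWalk.arcs])) (ht ▸ hu)
    intro v hv
    obtain ⟨p, hp⟩ := hv
    exact hwalk p hp hsU'
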